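/- arXiv:1504.04079 — 3 statements merged into one kernel-verified Lean document; each statement's English description precedes it below -/
import Mathlib

section
/- For every real number M > 0 and every s < 1, the Schwarzschild radius function r_M is differentiable at s with derivative r_M'(s) = -(4M²/r_M(s))·exp(-r_M(s)/(2M)). -/
/-- The Kruskal relation function `f_M(ρ) = (1 - ρ/(2M))·exp(ρ/(2M))`. -/
noncomputable def fM (M ρ : ℝ) : ℝ := (1 - ρ / (2 * M)) * Real.exp (ρ / (2 * M))

lemma fM_hasDerivAt (M : ℝ) (hM : 0 < M) (ρ : ℝ) :
    HasDerivAt (fM M) (-ρ / (4 * M ^ 2) * Real.exp (ρ / (2 * M))) ρ := by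
  have h1 : HasDerivAt (fun x : ℝ => 1 - x / (2 * M)) (-(1 / (2 * M))) ρ := by
    simpa using ((hasDerivAt_id ρ).div_const (2 * M)).const_sub 1
  have h2 : HasDerivAt (fun x : ℝ => Real.exp (x / (2 * M)))
      (Real.exp (ρ / (2 * M)) * (1 / (2 * M))) ρ := by
    exact (Real.hasDerivAt_exp _).comp ρ (by simpa using (hasDerivAt_id ρ).div_const (2 * M))
  have := h1.mul h2
  convert this using 1
  · rfl
  · rfl
  · rfl
  field_simp
  ring

lemma fM_strictAntiOn (M : ℝ) (hM : 0 < M) : StrictAntiOn (fM M) (Set.Ici 0) := by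
  apply strictAntiOn_of_deriv_neg (convex_Ici 0)
    (fun x _ => ((fM_hasDerivAt M hM x).continuousAt).continuousWithinAt)
  intro x hx
  rw [interior_Ici] at hx
  rw [(fM_hasDerivAt M hM x).deriv]
  have : (0:ℝ) < Real.exp (x / (2 * M)) := Real.exp_pos _
  have h4 : (0:ℝ) < 4 * M ^ 2 := by positivity
  have : -x / (4 * M ^ 2) < 0 := by
    apply div_neg_of_neg_of_pos (by linarith [hx.out]) h4
  exact mul_neg_of_neg_of_pos this (Real.exp_pos _)

/-- For every `M > 0` and every `s < 1`, the Schwarzschild radius function `r_M`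
(characterized by `r_M(s) > 0` and `f_M(r_M(s)) = s` for all `s < 1`) is
differentiable at `s` with derivative `r_M'(s) = -(4M²/r_M(s))·exp(-r_M(s)/(2M))`. -/
theorem rM_hasDerivAt (M : ℝ) (hM : 0 < M) (rM : ℝ → ℝ)
    (hrM : ∀ s : ℝ, s < 1 → 0 < rM s ∧ fM M (rM s) = s)
    (s : ℝ) (hs : s < 1) :
    HasDerivAt rM (-(4 * M ^ 2 / rM s) * Real.exp (-(rM s) / (2 * M))) s := by
  obtain ⟨hr, hfr⟩ := hrM s hs
  have hanti := fM_strictAntiOn M hM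
  -- continuity of rM at s
  have hcont : ContinuousAt rM s := by
    rw [Metric.continuousAt_iff]
    intro ε hε
    obtain ⟨ε', hε'pos, hε'le, hε'r⟩ : ∃ ε', 0 < ε' ∧ ε' ≤ ε ∧ ε' ≤ rM s / 2 :=
      ⟨min ε (rM s / 2), lt_min hε (by linarith), min_le_left _ _, min_le_right _ _⟩
    have hsub : (0:ℝ) < rM s - ε' := by linarith
    have has : fM M (rM s + ε') < s := by
      have h := hanti (Set.mem_Ici.mpr hr.le) (Set.mem_Ici.mpr (show (0:ℝ) ≤ rM s + ε' by linarith))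
        (show rM s < rM s + ε' by linarith)
      linarith [hfr]
    have hsb : s < fM M (rM s - ε') := by
      have h := hanti (Set.mem_Ici.mpr hsub.le) (Set.mem_Ici.mpr hr.le)
        (show rM s - ε' < rM s by linarith)
      linarith [hfr]
    have hb1 : fM M (rM s - ε') < 1 := by
      have := hanti (Set.self_mem_Ici) (Set.mem_Ici.mpr hsub.le) hsub
      simpa [fM] using this
    refine ⟨min (s - fM M (rM s + ε')) (fM M (rM s - ε') - s),
      lt_min (by linarith) (by linarith), ?_⟩
    intro s' hd
    rw [Real.dist_eq] at hd
    have habs := abs_lt.mp hd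
    have h1 : fM M (rM s + ε') < s' := by
      linarith [habs.1, min_le_left (s - fM M (rM s + ε')) (fM M (rM s - ε') - s)]
    have h2 : s' < fM M (rM s - ε') := by
      linarith [habs.2, min_le_right (s - fM M (rM s + ε')) (fM M (rM s - ε') - s)]
    have hs'1 : s' < 1 := lt_trans h2 hb1
    obtain ⟨hr', hfr'⟩ := hrM s' hs'1
    have hlt1 : rM s' < rM s + ε' := by
      by_contra hcon
      push_neg at hcon
      rcases eq_or_lt_of_le hcon with heq | hlt
      · rw [← heq] at hfr'; linarith
      · have := hanti (Set.mem_Ici.mpr (show (0:ℝ) ≤ rM s + ε' by linarith))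
          (Set.mem_Ici.mpr hr'.le) hlt
        rw [hfr'] at this
        linarith
    have hlt2 : rM s - ε' < rM s' := by
      by_contra hcon
      push_neg at hcon
      rcases eq_or_lt_of_le hcon with heq | hlt
      · rw [heq] at hfr'; linarith
      · have := hanti (Set.mem_Ici.mpr hr'.le) (Set.mem_Ici.mpr hsub.le) hlt
        rw [hfr'] at this
        linarith
    rw [Real.dist_eq, abs_lt]
    constructor <;> linarith
  have hf' : -(rM s) / (4 * M ^ 2) * Real.exp (rM s / (2 * M)) ≠ 0 := by
    have : -(rM s) / (4 * M ^ 2) < 0 := div_neg_of_neg_of_pos (by linarith) (by positivity)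
    exact ne_of_lt (mul_neg_of_neg_of_pos this (Real.exp_pos _))
  have hfg : ∀ᶠ y in nhds s, fM M (rM y) = y := by
    filter_upwards [Iio_mem_nhds hs] with y hy
    exact (hrM y hy).2
  have key := HasDerivAt.of_local_left_inverse hcont
    (by simpa using fM_hasDerivAt M hM (rM s)) hf' hfg
  convert key using 1
  · rfl
  rw [neg_div, Real.exp_neg, mul_inv]
  have h1 : (0:ℝ) < 4 * M ^ 2 := by positivity
  have h2 : Real.exp (rM s / (2 * M)) ≠ 0 := (Real.exp_pos _).ne'
  field_simp
end

section
/- For every real number M > 0 and every (τ,x) with (1-τ)² - x² < 1, the identity ∂_τ [ Ω(τ,x)·(1/r(τ,x) + 1/(2M))·x ] = ∂_x [ Ω(τ,x)·(1/r(τ,x) + 1/(2M))·(1-τ) ] holds; this is the scalar form of the divergence identity ∂^μ(^S A_μ)_{01} = 0 expressing that the Schwarzschild orthonormal frame satisfies a Lorentz gauge condition. -/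
/-- The radius function in the `(τ,x)` coordinates: `r(τ,x) = r_M((1-τ)² - x²)`. -/
noncomputable def rr (rM : ℝ → ℝ) (τ x : ℝ) : ℝ := rM ((1 - τ) ^ 2 - x ^ 2)

/-- The conformal factor `Ω²(τ,x) = (32M³/r(τ,x))·exp(-r(τ,x)/(2M))`. -/
noncomputable def Om2 (M : ℝ) (rM : ℝ → ℝ) (τ x : ℝ) : ℝ :=
  32 * M ^ 3 / rr rM τ x * Real.exp (-(rr rM τ x) / (2 * M))

/-- `Ω(τ,x) = √(Ω²(τ,x))`. -/
noncomputable def Om (M : ℝ) (rM : ℝ → ℝ) (τ x : ℝ) : ℝ := Real.sqrt (Om2 M rM τ x)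

/-- Auxiliary: the quantity `Ω·(1/r + 1/(2M))` as a function of `ρ = r`. -/
noncomputable def GG (M ρ : ℝ) : ℝ :=
  Real.sqrt (32 * M ^ 3 / ρ * Real.exp (-ρ / (2 * M))) * (1 / ρ + 1 / (2 * M))

/-- Strict derivative of `fM`. -/
lemma fM_hasStrictDerivAt (M : ℝ) (hM : 0 < M) (ρ : ℝ) :
    HasStrictDerivAt (fM M) (-(ρ / (4 * M ^ 2)) * Real.exp (ρ / (2 * M))) ρ := by
  have hM' : (2 * M) ≠ 0 := by positivity
  have h1 : HasStrictDerivAt (fun ρ : ℝ => ρ / (2 * M)) (1 / (2 * M)) ρ := by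
    simpa using (hasStrictDerivAt_id ρ).div_const (2 * M)
  have h2 := h1.exp
  have h3 : HasStrictDerivAt (fun ρ : ℝ => 1 - ρ / (2 * M)) (0 - 1 / (2 * M)) ρ :=
    (hasStrictDerivAt_const ρ 1).sub h1
  have h4 := h3.mul h2
  have : fM M = fun ρ : ℝ => (1 - ρ / (2 * M)) * Real.exp (ρ / (2 * M)) := rfl
  rw [this]
  refine h4.congr_deriv ?_
  field_simp
  ring

/-- For every `M > 0` and `(τ,x)` with `(1-τ)² - x² < 1`, the identity
`∂_τ[Ω·(1/r + 1/(2M))·x] = ∂_x[Ω·(1/r + 1/(2M))·(1-τ)]` holds; this is the scalar form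
of the divergence identity `∂^μ(^S A_μ)_{01} = 0` expressing that the Schwarzschild
orthonormal frame satisfies a Lorentz gauge condition. -/
theorem lorentz_gauge_divergence_identity (M : ℝ) (hM : 0 < M) (rM : ℝ → ℝ)
    (hrM : ∀ s : ℝ, s < 1 → 0 < rM s ∧ fM M (rM s) = s)
    (τ x : ℝ) (h : (1 - τ) ^ 2 - x ^ 2 < 1) :
    deriv (fun t : ℝ => Om M rM t x * (1 / rr rM t x + 1 / (2 * M)) * x) τ =
      deriv (fun y : ℝ => Om M rM τ y * (1 / rr rM τ y + 1 / (2 * M)) * (1 - τ)) x := by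
  obtain ⟨hr₀pos, hfr₀⟩ := hrM ((1 - τ) ^ 2 - x ^ 2) h
  set s₀ : ℝ := (1 - τ) ^ 2 - x ^ 2 with hs₀def
  set r₀ : ℝ := rM s₀ with hr₀def
  set d : ℝ := -(r₀ / (4 * M ^ 2)) * Real.exp (r₀ / (2 * M)) with hddef
  have hdne : d ≠ 0 := by
    have h1 : 0 < r₀ / (4 * M ^ 2) := by positivity
    have h2 := Real.exp_pos (r₀ / (2 * M))
    rw [hddef]
    nlinarith
  -- fM is strictly antitone on [0, ∞)
  have hanti : StrictAntiOn (fM M) (Set.Ici 0) := by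
    apply strictAntiOn_of_deriv_neg (convex_Ici 0)
    · exact fun ρ _ =>
        (fM_hasStrictDerivAt M hM ρ).hasDerivAt.continuousAt.continuousWithinAt
    · intro ρ hρ
      rw [interior_Ici] at hρ
      rw [(fM_hasStrictDerivAt M hM ρ).hasDerivAt.deriv]
      have h2 := Real.exp_pos (ρ / (2 * M))
      have h3 : (0 : ℝ) < ρ := hρ
      have h4 : 0 < ρ / (4 * M ^ 2) := by positivity
      nlinarith
  have hfM0 : fM M 0 = 1 := by simp [fM]
  -- rM is a left inverse of fM near r₀
  have hg : ∀ᶠ ρ in nhds r₀, rM (fM M ρ) = ρ := by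
    filter_upwards [eventually_gt_nhds hr₀pos] with ρ hρ
    have hlt : fM M ρ < 1 := by
      have := hanti Set.self_mem_Ici (Set.mem_Ici.2 hρ.le) hρ
      rwa [hfM0] at this
    obtain ⟨hpos', heq'⟩ := hrM (fM M ρ) hlt
    exact hanti.injOn (Set.mem_Ici.2 hpos'.le) (Set.mem_Ici.2 hρ.le) heq'
  -- derivative of rM at s₀
  have hrM' : HasDerivAt rM d⁻¹ s₀ := by
    have := ((fM_hasStrictDerivAt M hM r₀).to_local_left_inverse hdne hg).hasDerivAt
    rwa [hfr₀] at this
  -- inner coordinate functions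
  have hτin : HasDerivAt (fun t : ℝ => (1 - t) ^ 2 - x ^ 2) (-(2 * (1 - τ))) τ := by
    have h1 : HasDerivAt (fun t : ℝ => 1 - t) (-1) τ := by
      exact (hasDerivAt_id τ).const_sub 1
    have h2 := (h1.pow 2).sub_const (x ^ 2)
    refine h2.congr_deriv ?_
    push_cast
    ring
  have hxin : HasDerivAt (fun y : ℝ => (1 - τ) ^ 2 - y ^ 2) (-(2 * x)) x := by
    have h2 := ((hasDerivAt_id x).pow 2).const_sub ((1 - τ) ^ 2)
    refine h2.congr_deriv ?_
    push_cast
    simp only [id_eq]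
    ring
  have hrτ : HasDerivAt (fun t : ℝ => rM ((1 - t) ^ 2 - x ^ 2)) (d⁻¹ * -(2 * (1 - τ))) τ :=
    hrM'.comp τ hτin
  have hrx : HasDerivAt (fun y : ℝ => rM ((1 - τ) ^ 2 - y ^ 2)) (d⁻¹ * -(2 * x)) x :=
    hrM'.comp x hxin
  -- GG is differentiable at r₀
  have hGd : DifferentiableAt ℝ (GG M) r₀ := by
    have h0 : 32 * M ^ 3 / r₀ * Real.exp (-r₀ / (2 * M)) ≠ 0 := by positivity
    have hid : DifferentiableAt ℝ (fun ρ : ℝ => ρ) r₀ := differentiableAt_fun_id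
    have h1 : DifferentiableAt ℝ (fun ρ : ℝ => 32 * M ^ 3 / ρ * Real.exp (-ρ / (2 * M))) r₀ :=
      ((differentiableAt_const _).div hid hr₀pos.ne').mul ((hid.neg.div_const _).exp)
    exact (h1.sqrt h0).mul
      (((differentiableAt_const _).div hid hr₀pos.ne').add (differentiableAt_const _))
  set c : ℝ := deriv (GG M) r₀ with hcdef
  have hG : HasDerivAt (GG M) c r₀ := hGd.hasDerivAt
  -- the two composite derivatives
  have hL : HasDerivAt (fun t : ℝ => GG M (rM ((1 - t) ^ 2 - x ^ 2)) * x)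
      (c * (d⁻¹ * -(2 * (1 - τ))) * x) τ := by
    have := (hG.comp τ hrτ).mul_const x; exact this
  have hR : HasDerivAt (fun y : ℝ => GG M (rM ((1 - τ) ^ 2 - y ^ 2)) * (1 - τ))
      (c * (d⁻¹ * -(2 * x)) * (1 - τ)) x := (hG.comp x hrx).mul_const (1 - τ)
  have hLd : deriv (fun t : ℝ => Om M rM t x * (1 / rr rM t x + 1 / (2 * M)) * x) τ
      = c * (d⁻¹ * -(2 * (1 - τ))) * x := hL.deriv
  have hRd : deriv (fun y : ℝ => Om M rM τ y * (1 / rr rM τ y + 1 / (2 * M)) * (1 - τ)) x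
      = c * (d⁻¹ * -(2 * x)) * (1 - τ) := hR.deriv
  rw [hLd, hRd]
  ring
end

section
/- For every real number M > 0, every ε ∈ (0,1), and every real p ≥ 5/3, the integral ∫₀^ε r(0,x)^{-3p/2} · Ω(0,x)·r(0,x)² dx diverges (equals +∞); that is, the mean curvature of the initial hypersurface Σ₀, which blows up like r^{-3/2}, fails to be in L^p(Σ₀) for all p ≥ 5/3. -/
open MeasureTheory

/-- Key elementary inequality: `(1-u)·e^u ≤ 1 - u²/2` for `u ≥ 0`. -/
lemma key_ineq {u : ℝ} (hu : 0 ≤ u) : (1 - u) * Real.exp u ≤ 1 - u ^ 2 / 2 := by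
  have h : ∀ v ∈ Set.Ici (0:ℝ),
      HasDerivAt (fun w => 1 - w ^ 2 / 2 - (1 - w) * Real.exp w)
        (v * (Real.exp v - 1)) v := by
    intro v _
    have h1 : HasDerivAt (fun w : ℝ => 1 - w ^ 2 / 2) (-v) v := by
      have := ((hasDerivAt_pow 2 v).div_const 2).const_sub 1
      simpa using this.congr_deriv (by ring)
    have h2 : HasDerivAt (fun w : ℝ => (1 - w) * Real.exp w) (-(v * Real.exp v)) v := by
      have := ((hasDerivAt_id v).const_sub 1).mul (Real.hasDerivAt_exp v)
      exact this.congr_deriv (by simp [id_eq]; ring)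
    exact (h1.sub h2).congr_deriv (by ring)
  have hmono : MonotoneOn (fun w : ℝ => 1 - w ^ 2 / 2 - (1 - w) * Real.exp w)
      (Set.Ici (0:ℝ)) := by
    apply monotoneOn_of_deriv_nonneg (convex_Ici 0)
      (Continuous.continuousOn (by continuity))
    · intro v hv
      rw [interior_Ici] at hv
      exact ((h v (Set.mem_Ici.2 (le_of_lt (Set.mem_Ioi.1 hv)))).hasDerivWithinAt.differentiableWithinAt).mono
        interior_subset
    · intro v hv
      rw [interior_Ici] at hv
      rw [(h v (Set.mem_Ici.2 (Set.mem_Ioi.1 hv).le)).deriv]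
      have h1 : (1:ℝ) ≤ Real.exp v := Real.one_le_exp hv.le
      have h0 : (0:ℝ) ≤ v := hv.le
      nlinarith
  have h0 := hmono (Set.self_mem_Ici) (Set.mem_Ici.2 hu) hu
  norm_num [Real.exp_zero] at h0
  nlinarith [h0]

/-- Divergence of `∫ c/x` near `0`. -/
lemma lintegral_inv_eq_top (c δ : ℝ) (hc : 0 < c) (hδ : 0 < δ) :
    ∫⁻ x in Set.Ioo (0:ℝ) δ, ENNReal.ofReal (c * x⁻¹) = ⊤ := by
  by_contra h
  have hmeas : AEStronglyMeasurable (fun x : ℝ => c * x⁻¹)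
      (volume.restrict (Set.Ioo (0:ℝ) δ)) :=
    (measurable_const.mul measurable_inv).aestronglyMeasurable
  have hnn : 0 ≤ᵐ[volume.restrict (Set.Ioo (0:ℝ) δ)] fun x : ℝ => c * x⁻¹ := by
    filter_upwards [ae_restrict_mem measurableSet_Ioo] with x hx
    exact mul_nonneg hc.le (inv_nonneg.2 hx.1.le)
  have hint : IntegrableOn (fun x : ℝ => c * x⁻¹) (Set.Ioo (0:ℝ) δ) := by
    refine ⟨hmeas, ?_⟩
    rw [hasFiniteIntegral_iff_ofReal hnn]
    exact lt_top_iff_ne_top.2 h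
  have h3 : IntegrableOn (fun x : ℝ => c⁻¹ * (c * x⁻¹)) (Set.Ioo (0:ℝ) δ) :=
    hint.const_mul c⁻¹
  have hint2 : IntegrableOn (fun x : ℝ => x ^ (-1:ℝ)) (Set.Ioo (0:ℝ) δ) := by
    apply h3.congr_fun _ measurableSet_Ioo
    intro x hx
    show c⁻¹ * (c * x⁻¹) = x ^ (-1:ℝ)
    rw [Real.rpow_neg_one]
    field_simp
  rw [intervalIntegral.integrableOn_Ioo_rpow_iff hδ] at hint2
  exact absurd hint2 (by norm_num)

/-- For every `M > 0`, every `ε ∈ (0,1)`, and every real `p ≥ 5/3`, the integral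
`∫₀^ε r(0,x)^{-3p/2} · Ω(0,x)·r(0,x)² dx` diverges (equals `+∞`); that is, the mean
curvature of the initial hypersurface `Σ₀`, which blows up like `r^{-3/2}`, fails to be
in `L^p(Σ₀)` for all `p ≥ 5/3`. -/
theorem mean_curvature_not_Lp (M : ℝ) (hM : 0 < M) (rM : ℝ → ℝ)
    (hrM : ∀ s : ℝ, s < 1 → 0 < rM s ∧ fM M (rM s) = s)
    (ε : ℝ) (hε0 : 0 < ε) (hε1 : ε < 1) (p : ℝ) (hp : 5 / 3 ≤ p) :
    ∫⁻ x in Set.Ioo (0 : ℝ) ε,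
      ENNReal.ofReal (rr rM 0 x ^ (-(3 * p / 2)) * (Om M rM 0 x * (rr rM 0 x) ^ 2)) = ⊤ := by
  set c2 : ℝ := 2 * Real.sqrt 2 * M with hc2def
  have hc2 : 0 < c2 := by positivity
  set δ : ℝ := min ε (1 / c2) with hδdef
  have hδ : 0 < δ := lt_min hε0 (by positivity)
  set K : ℝ := 32 * M ^ 3 * Real.exp (-(1 / (2 * M))) with hKdef
  have hK : 0 < K := by positivity
  set c : ℝ := Real.sqrt K / c2 with hcdef
  have hc : 0 < c := by positivity
  -- pointwise bound on Ioo 0 δ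
  have hbound : ∀ x ∈ Set.Ioo (0:ℝ) δ,
      ENNReal.ofReal (c * x⁻¹) ≤
      ENNReal.ofReal (rr rM 0 x ^ (-(3 * p / 2)) * (Om M rM 0 x * (rr rM 0 x) ^ 2)) := by
    intro x hx
    obtain ⟨hx0, hxδ⟩ := hx
    have hs : (1:ℝ) - x ^ 2 < 1 := by nlinarith
    have hr0 : 0 < rM (1 - x ^ 2) := (hrM _ hs).1
    have hfr : fM M (rM (1 - x ^ 2)) = 1 - x ^ 2 := (hrM _ hs).2
    have hrreq : rr rM 0 x = rM (1 - x ^ 2) := by simp [rr]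
    set r : ℝ := rM (1 - x ^ 2) with hrdef
    simp only [fM] at hfr
    -- r ≤ c2 * x
    have hu : 0 ≤ r / (2 * M) := by positivity
    have hkey := key_ineq hu
    have hu2 : (r / (2 * M)) ^ 2 ≤ 2 * x ^ 2 := by nlinarith
    have hrle : r ≤ c2 * x := by
      have h2 : (Real.sqrt 2 * x) ^ 2 = 2 * x ^ 2 := by
        rw [mul_pow, Real.sq_sqrt (by norm_num : (0:ℝ) ≤ 2)]
      have h1 : r / (2 * M) ≤ Real.sqrt 2 * x := by
        nlinarith [Real.sqrt_nonneg 2, sq_nonneg (r / (2 * M) - Real.sqrt 2 * x),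
          mul_pos (Real.sqrt_pos.2 (by norm_num : (0:ℝ) < 2)) hx0]
      calc r = (r / (2 * M)) * (2 * M) := by field_simp
        _ ≤ (Real.sqrt 2 * x) * (2 * M) := by
            exact mul_le_mul_of_nonneg_right h1 (by positivity)
        _ = c2 * x := by rw [hc2def]; ring
    have hr1 : r ≤ 1 := by
      have hx1 : x ≤ 1 / c2 := le_of_lt (lt_of_lt_of_le hxδ (min_le_right _ _))
      have : c2 * x ≤ c2 * (1 / c2) := mul_le_mul_of_nonneg_left hx1 hc2.le
      rw [mul_one_div, div_self hc2.ne'] at this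
      linarith
    -- Om² ≥ K / r
    have hexp : Real.exp (-(1 / (2 * M))) ≤ Real.exp (-r / (2 * M)) := by
      apply Real.exp_le_exp.2
      rw [neg_div]
      apply neg_le_neg
      gcongr
    have hOm2 : K / r ≤ Om2 M rM 0 x := by
      rw [Om2, hrreq]
      have heq : K / r = 32 * M ^ 3 / r * Real.exp (-(1 / (2 * M))) := by
        rw [hKdef]; ring
      rw [heq]
      exact mul_le_mul_of_nonneg_left hexp (by positivity)
    -- Om ≥ √K * r^(-1/2)
    have hOm : Real.sqrt K * r ^ (-(1/2) : ℝ) ≤ Om M rM 0 x := by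
      have h1 : Real.sqrt (K / r) ≤ Om M rM 0 x := Real.sqrt_le_sqrt hOm2
      have h2 : Real.sqrt (K / r) = Real.sqrt K * r ^ (-(1/2) : ℝ) := by
        rw [Real.sqrt_div hK.le, Real.sqrt_eq_rpow r, Real.rpow_neg hr0.le, div_eq_mul_inv]
      rw [← h2]; exact h1
    have hrp : r ^ (-(5/2) : ℝ) ≤ r ^ (-(3 * p / 2)) :=
      Real.rpow_le_rpow_of_exponent_ge hr0 hr1 (by linarith)
    apply ENNReal.ofReal_le_ofReal
    have hfinal : c * x⁻¹ ≤ Real.sqrt K * r⁻¹ := by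
      have hrinv : (c2 * x)⁻¹ ≤ r⁻¹ := inv_anti₀ hr0 hrle
      have heq : c * x⁻¹ = Real.sqrt K * (c2 * x)⁻¹ := by
        rw [hcdef, mul_inv]; ring
      rw [heq]
      exact mul_le_mul_of_nonneg_left hrinv (Real.sqrt_nonneg K)
    have hmain : Real.sqrt K * r⁻¹ ≤
        rr rM 0 x ^ (-(3 * p / 2)) * (Om M rM 0 x * (rr rM 0 x) ^ 2) := by
      rw [hrreq]
      have step1 : r ^ (-(5/2) : ℝ) * (Real.sqrt K * r ^ (-(1/2) : ℝ) * r ^ 2)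
          ≤ r ^ (-(3 * p / 2)) * (Om M rM 0 x * r ^ 2) := by
        apply mul_le_mul hrp _ (by positivity) (by positivity)
        exact mul_le_mul_of_nonneg_right hOm (by positivity)
      have step2 : r ^ (-(5/2) : ℝ) * (Real.sqrt K * r ^ (-(1/2) : ℝ) * r ^ 2)
          = Real.sqrt K * r⁻¹ := by
        have h2 : (r : ℝ) ^ (2 : ℕ) = r ^ ((2 : ℝ)) := by
          rw [← Real.rpow_natCast r 2]; norm_num
        rw [h2, ← Real.rpow_neg_one r]
        rw [show r ^ (-(5/2) : ℝ) * (Real.sqrt K * r ^ (-(1/2) : ℝ) * r ^ (2:ℝ))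
            = Real.sqrt K * (r ^ (-(5/2) : ℝ) * r ^ (-(1/2) : ℝ) * r ^ (2:ℝ)) by ring]
        rw [← Real.rpow_add hr0, ← Real.rpow_add hr0]
        norm_num
      linarith [step1, step2]
    linarith
  have hsub : Set.Ioo (0:ℝ) δ ⊆ Set.Ioo (0:ℝ) ε :=
    Set.Ioo_subset_Ioo le_rfl (min_le_left _ _)
  have h1 : (⊤ : ENNReal) ≤ ∫⁻ x in Set.Ioo (0:ℝ) ε,
      ENNReal.ofReal (rr rM 0 x ^ (-(3 * p / 2)) * (Om M rM 0 x * (rr rM 0 x) ^ 2)) := by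
    rw [← lintegral_inv_eq_top c δ hc hδ]
    calc ∫⁻ x in Set.Ioo (0:ℝ) δ, ENNReal.ofReal (c * x⁻¹)
        ≤ ∫⁻ x in Set.Ioo (0:ℝ) δ,
            ENNReal.ofReal (rr rM 0 x ^ (-(3 * p / 2)) * (Om M rM 0 x * (rr rM 0 x) ^ 2)) := by
          apply lintegral_mono_ae
          filter_upwards [ae_restrict_mem measurableSet_Ioo] with x hx
          exact hbound x hx
      _ ≤ _ := lintegral_mono_set hsub
  exact top_le_iff.1 h1
end
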